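/- For γ > 0, λ > 0, α ∈ (0,1) and t₀ ≥ 1, define J_∞ = t₀^{α-1} ln t₀ · ∫_{c₀ t₀}^∞ e^{-ξ} b_{α,1}(λ, t₀, ξ) F(ξ, t₀, α)/(f² + g²) dξ. Then |J_∞| ≤ (C/λ) t₀^{-1} ln t₀ · e^{-c₀ t₀} + (C/λ³) t₀^{-2α-1} ln t₀ · Γ(3), for a constant C = C(γ, α) > 0; in particular, J_∞ = o(1) · (1/λ) t₀^{-α-1} ln t₀ as t₀ → ∞. -/

import Mathlib

set_option maxHeartbeats 1000000


open Real MeasureTheory Set Filter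

noncomputable def Jinfty_Phi (γ lam α t₀ ξ : ℝ) : ℝ :=
  Real.exp (-ξ) *
    ((1 / π) * (lam * γ * ξ ^ α * Real.sin (α * π)) /
      ((-ξ * t₀ ^ (α - 1) + lam * γ * ξ ^ α * Real.cos (α * π) + lam * t₀ ^ α) ^ 2
        + (lam * γ * ξ ^ α * Real.sin (α * π)) ^ 2)) *
    (((-ξ * t₀ ^ (α - 1) + lam * γ * ξ ^ α * Real.cos (α * π) + lam * t₀ ^ α) ^ 2
        + (lam * γ * ξ ^ α * Real.sin (α * π)) ^ 2
        - 2 * (-ξ * t₀ ^ (α - 1) + lam * γ * ξ ^ α * Real.cos (α * π) + lam * t₀ ^ α)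
            * (-ξ * t₀ ^ (α - 1) + lam * t₀ ^ α)) /
      ((-ξ * t₀ ^ (α - 1) + lam * γ * ξ ^ α * Real.cos (α * π) + lam * t₀ ^ α) ^ 2
        + (lam * γ * ξ ^ α * Real.sin (α * π)) ^ 2))

lemma Jinfty_Phi_bound (γ lam α c₀ : ℝ) (hγ : 0 < γ) (hlam : 0 < lam)
    (hα : α ∈ Set.Ioo (0:ℝ) 1) (hc₀ : 0 < c₀) :
    ∃ K : ℝ, 0 < K ∧ ∀ t₀ : ℝ, 1 ≤ t₀ → ∀ ξ ∈ Set.Ioi (c₀ * t₀),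
      |Jinfty_Phi γ lam α t₀ ξ| ≤ Real.exp (-ξ) *
        (K / (lam * (c₀ * t₀) ^ α) + K / (lam ^ 3 * ((c₀ * t₀) ^ α) ^ 3) * ξ ^ 2) := by
  obtain ⟨hα0, hα1⟩ := hα
  have hπ := Real.pi_pos
  have hs : 0 < Real.sin (α * π) :=
    Real.sin_pos_of_pos_of_lt_pi (by positivity) ((mul_lt_iff_lt_one_left hπ).mpr hα1)
  set s := Real.sin (α * π) with hs_def
  set a₀ : ℝ := max 1 (c₀ ^ (-α)) with ha₀_def
  have ha₀1 : (1:ℝ) ≤ a₀ := le_max_left _ _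
  have ha₀2 : c₀ ^ (-α) ≤ a₀ := le_max_right _ _
  have ha₀ : 0 < a₀ := lt_of_lt_of_le one_pos ha₀1
  set c₁ : ℝ := (a₀ + γ) ^ 2 + γ ^ 2 + 2 * (a₀ + γ) * a₀ with hc₁_def
  have hc₁ : 0 < c₁ := by positivity
  refine ⟨2 * c₁ / (π * γ ^ 3 * s ^ 3), by positivity, ?_⟩
  intro t₀ ht₀ ξ hξ
  rw [Set.mem_Ioi] at hξ
  have ht₀0 : (0:ℝ) < t₀ := lt_of_lt_of_le one_pos ht₀
  have hct : 0 < c₀ * t₀ := by positivity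
  have hξ0 : 0 < ξ := hct.trans hξ
  unfold Jinfty_Phi
  set xa := ξ ^ α with hxa_def
  have hxa : 0 < xa := Real.rpow_pos_of_pos hξ0 α
  set b := (c₀ * t₀) ^ α with hb_def
  have hb : 0 < b := Real.rpow_pos_of_pos hct α
  have hbxa : b ≤ xa := Real.rpow_le_rpow hct.le hξ.le hα0.le
  set u := t₀ ^ (α - 1) with hu_def
  set v := t₀ ^ α with hv_def
  have hu0 : 0 ≤ u := (Real.rpow_pos_of_pos ht₀0 _).le
  have hv0 : 0 < v := Real.rpow_pos_of_pos ht₀0 _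
  have hu1 : u ≤ 1 := Real.rpow_le_one_of_one_le_of_nonpos ht₀ (by linarith)
  have hvxa : v ≤ xa * c₀ ^ (-α) := by
    calc v ≤ (ξ / c₀) ^ α :=
          Real.rpow_le_rpow ht₀0.le ((le_div_iff₀ hc₀).mpr (by linarith [hξ]; )) hα0.le
      _ = xa * c₀ ^ (-α) := by
          rw [Real.div_rpow hξ0.le hc₀.le, Real.rpow_neg hc₀.le, div_eq_mul_inv, hxa_def]
  set P := ξ + lam * xa with hP_def
  have hP : 0 < P := by positivity
  set g := lam * γ * xa * s with hg_def
  have hg : 0 < g := by positivity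
  set ff := -ξ * u + lam * γ * xa * Real.cos (α * π) + lam * v with hff_def
  set hh := -ξ * u + lam * v with hhh_def
  set D := ff ^ 2 + g ^ 2 with hD_def
  have hg2 : 0 < g ^ 2 := pow_pos hg 2
  have hD : 0 < D := by rw [hD_def]; exact add_pos_of_nonneg_of_pos (sq_nonneg ff) hg2
  have hgD : g ^ 2 ≤ D := le_add_of_nonneg_left (sq_nonneg ff)
  set F := D - 2 * ff * hh with hF_def
  -- bounds on h, f, g in terms of P
  have habs_hh : |hh| ≤ a₀ * P := by
    have h1 : |hh| ≤ ξ * u + lam * v := by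
      rw [hhh_def]
      calc |(-ξ * u + lam * v)| ≤ |(-ξ * u)| + |lam * v| := abs_add_le _ _
        _ = ξ * u + lam * v := by
            rw [abs_mul, abs_mul, abs_neg, abs_of_nonneg hξ0.le, abs_of_nonneg hu0,
              abs_of_nonneg hlam.le, abs_of_nonneg hv0.le]
    calc |hh| ≤ ξ * u + lam * v := h1
      _ ≤ ξ * 1 + lam * (xa * c₀ ^ (-α)) := by gcongr
      _ ≤ a₀ * P := by
          rw [hP_def]
          have h2 : ξ * 1 ≤ a₀ * ξ := by rw [mul_one]; exact le_mul_of_one_le_left hξ0.le ha₀1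
          have h3 : lam * (xa * c₀ ^ (-α)) ≤ a₀ * (lam * xa) := by
            rw [show a₀ * (lam * xa) = lam * (xa * a₀) by ring]
            gcongr
          linarith [mul_add a₀ ξ (lam * xa)]
  have habs_ff : |ff| ≤ (a₀ + γ) * P := by
    have hsplit : ff = hh + lam * γ * xa * Real.cos (α * π) := by
      rw [hff_def, hhh_def]; ring
    have hcos : |lam * γ * xa * Real.cos (α * π)| ≤ lam * γ * xa := by
      rw [abs_mul, abs_of_nonneg (by positivity : (0:ℝ) ≤ lam * γ * xa)]
      exact mul_le_of_le_one_right (by positivity) (Real.abs_cos_le_one _)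
    calc |ff| = |hh + lam * γ * xa * Real.cos (α * π)| := by rw [hsplit]
      _ ≤ |hh| + |lam * γ * xa * Real.cos (α * π)| := abs_add_le _ _
      _ ≤ a₀ * P + lam * γ * xa := by linarith
      _ ≤ (a₀ + γ) * P := by
          rw [hP_def]
          linarith [mul_nonneg hγ.le hξ0.le,
            show (a₀ + γ) * (ξ + lam * xa) = a₀ * (ξ + lam * xa) + γ * ξ + lam * γ * xa
              from by ring]
  have hgP : g ≤ γ * P := by
    have h1 : g ≤ lam * γ * xa := by
      rw [hg_def]
      exact mul_le_of_le_one_right (by positivity) (Real.sin_le_one _)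
    refine h1.trans ?_
    rw [hP_def]
    linarith [mul_nonneg hγ.le hξ0.le,
      show γ * (ξ + lam * xa) = γ * ξ + lam * γ * xa from by ring]
  have hP2 : P ^ 2 ≤ 2 * (ξ ^ 2 + lam ^ 2 * xa ^ 2) := by
    rw [hP_def]
    linarith [sq_nonneg (ξ - lam * xa),
      show 2 * (ξ ^ 2 + lam ^ 2 * xa ^ 2) - (ξ + lam * xa) ^ 2 = (ξ - lam * xa) ^ 2
        from by ring]
  have habs_F : |F| ≤ 2 * c₁ * (ξ ^ 2 + lam ^ 2 * xa ^ 2) := by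
    have h1 : |F| ≤ D + 2 * |ff| * |hh| := by
      rw [hF_def]
      calc |D - 2 * ff * hh| ≤ |D| + |2 * ff * hh| := abs_sub _ _
        _ = D + 2 * |ff| * |hh| := by
            rw [abs_of_nonneg hD.le, abs_mul, abs_mul, abs_two]
    have hff2 : ff ^ 2 ≤ ((a₀ + γ) * P) ^ 2 := by
      have := pow_le_pow_left₀ (abs_nonneg ff) habs_ff 2
      rwa [sq_abs] at this
    have hgsq : g ^ 2 ≤ (γ * P) ^ 2 := pow_le_pow_left₀ hg.le hgP 2
    have hmul : |ff| * |hh| ≤ ((a₀ + γ) * P) * (a₀ * P) :=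
      mul_le_mul habs_ff habs_hh (abs_nonneg _) (by positivity)
    have h2 : |F| ≤ ((a₀ + γ) * P) ^ 2 + (γ * P) ^ 2 + 2 * (((a₀ + γ) * P) * (a₀ * P)) := by
      rw [hD_def] at h1; linarith
    have h3 : ((a₀ + γ) * P) ^ 2 + (γ * P) ^ 2 + 2 * (((a₀ + γ) * P) * (a₀ * P))
        = c₁ * P ^ 2 := by rw [hc₁_def]; ring
    have h4 : c₁ * P ^ 2 ≤ 2 * c₁ * (ξ ^ 2 + lam ^ 2 * xa ^ 2) := by
      have h := mul_le_mul_of_nonneg_left hP2 hc₁.le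
      linarith [show c₁ * (2 * (ξ ^ 2 + lam ^ 2 * xa ^ 2))
          = 2 * c₁ * (ξ ^ 2 + lam ^ 2 * xa ^ 2) from by ring]
    linarith
  -- putting it together
  have habs : |Real.exp (-ξ) * (1 / π * g / D) * (F / D)|
      = Real.exp (-ξ) * (1 / π * g / D) * (|F| / D) := by
    rw [abs_mul, abs_mul, abs_div, abs_div, abs_of_nonneg (Real.exp_pos _).le,
      abs_of_nonneg hD.le, abs_of_nonneg (by positivity : (0:ℝ) ≤ 1 / π * g)]
  rw [habs]
  have key1 : Real.exp (-ξ) * (1 / π * g / D) * (|F| / D)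
      ≤ Real.exp (-ξ) * (1 / π * g / g ^ 2) * (|F| / g ^ 2) := by
    gcongr <;> first | exact hgD | positivity
  refine key1.trans ?_
  have key2 : 1 / π * g / g ^ 2 * (|F| / g ^ 2) = |F| / (π * g ^ 3) := by
    field_simp
  have key3 : |F| / (π * g ^ 3) ≤ (2 * c₁ * (ξ ^ 2 + lam ^ 2 * xa ^ 2)) / (π * g ^ 3) := by
    gcongr
  have key4 : (2 * c₁ * (ξ ^ 2 + lam ^ 2 * xa ^ 2)) / (π * g ^ 3)
      = (2 * c₁ / (π * γ ^ 3 * s ^ 3)) / (lam * xa)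
        + (2 * c₁ / (π * γ ^ 3 * s ^ 3)) / (lam ^ 3 * xa ^ 3) * ξ ^ 2 := by
    rw [hg_def]
    field_simp
    ring
  have key5 : (2 * c₁ / (π * γ ^ 3 * s ^ 3)) / (lam * xa)
        + (2 * c₁ / (π * γ ^ 3 * s ^ 3)) / (lam ^ 3 * xa ^ 3) * ξ ^ 2
      ≤ (2 * c₁ / (π * γ ^ 3 * s ^ 3)) / (lam * b)
        + (2 * c₁ / (π * γ ^ 3 * s ^ 3)) / (lam ^ 3 * b ^ 3) * ξ ^ 2 := by
    gcongr <;> positivity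
  calc Real.exp (-ξ) * (1 / π * g / g ^ 2) * (|F| / g ^ 2)
      = Real.exp (-ξ) * (1 / π * g / g ^ 2 * (|F| / g ^ 2)) := by ring
    _ ≤ Real.exp (-ξ) * ((2 * c₁ / (π * γ ^ 3 * s ^ 3)) / (lam * b)
        + (2 * c₁ / (π * γ ^ 3 * s ^ 3)) / (lam ^ 3 * b ^ 3) * ξ ^ 2) := by
        rw [key2]
        exact mul_le_mul_of_nonneg_left ((key3.trans_eq key4).trans key5) (Real.exp_pos _).le

lemma Jinfty_exp_sq_integrableOn :
    IntegrableOn (fun x : ℝ => Real.exp (-x) * x ^ 2) (Set.Ioi (0:ℝ)) := by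
  have h := Real.GammaIntegral_convergent (show (0:ℝ) < 3 by norm_num)
  refine h.congr_fun (fun x hx => ?_) measurableSet_Ioi
  dsimp only
  rw [show (3:ℝ) - 1 = ((2:ℕ):ℝ) by norm_num, Real.rpow_natCast]

lemma Jinfty_exp_integrableOn (a : ℝ) :
    IntegrableOn (fun x : ℝ => Real.exp (-x)) (Set.Ioi a) := by
  have h := exp_neg_integrableOn_Ioi a (one_pos (α := ℝ))
  refine h.congr_fun (fun x _ => ?_) measurableSet_Ioi
  norm_num

lemma Jinfty_exp_sq_integral_le {a : ℝ} (ha : 0 < a) :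
    (∫ x in Set.Ioi a, Real.exp (-x) * x ^ 2) ≤ Real.Gamma 3 := by
  have h1 : (∫ x in Set.Ioi a, Real.exp (-x) * x ^ 2)
      ≤ ∫ x in Set.Ioi (0:ℝ), Real.exp (-x) * x ^ 2 := by
    refine setIntegral_mono_set Jinfty_exp_sq_integrableOn ?_ ?_
    · filter_upwards with x
      positivity
    · exact HasSubset.Subset.eventuallyLE (Set.Ioi_subset_Ioi ha.le)
  refine h1.trans_eq ?_
  rw [Real.Gamma_eq_integral (by norm_num : (0:ℝ) < 3)]
  refine setIntegral_congr_fun measurableSet_Ioi (fun x hx => ?_)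
  rw [show (3:ℝ) - 1 = ((2:ℕ):ℝ) by norm_num, Real.rpow_natCast]

lemma Jinfty_integral_bound (γ lam α c₀ : ℝ) (hγ : 0 < γ) (hlam : 0 < lam)
    (hα : α ∈ Set.Ioo (0:ℝ) 1) (hc₀ : 0 < c₀) :
    ∃ K : ℝ, 0 < K ∧ ∀ t₀ : ℝ, 1 ≤ t₀ →
      |∫ ξ in Set.Ioi (c₀ * t₀), Jinfty_Phi γ lam α t₀ ξ|
        ≤ K / (lam * (c₀ * t₀) ^ α) * Real.exp (-(c₀ * t₀))
          + K / (lam ^ 3 * ((c₀ * t₀) ^ α) ^ 3) * Real.Gamma 3 := by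
  obtain ⟨K, hK, hKb⟩ := Jinfty_Phi_bound γ lam α c₀ hγ hlam hα hc₀
  refine ⟨K, hK, fun t₀ ht₀ => ?_⟩
  have ht₀0 : (0:ℝ) < t₀ := lt_of_lt_of_le one_pos ht₀
  have hct : 0 < c₀ * t₀ := by positivity
  have hb : 0 < (c₀ * t₀) ^ α := Real.rpow_pos_of_pos hct α
  set M₁ := K / (lam * (c₀ * t₀) ^ α) with hM₁
  set M₂ := K / (lam ^ 3 * ((c₀ * t₀) ^ α) ^ 3) with hM₂
  have hM₁0 : 0 < M₁ := div_pos hK (by positivity)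
  have hM₂0 : 0 < M₂ := div_pos hK (by positivity)
  have h1 : IntegrableOn (fun ξ : ℝ => Real.exp (-ξ)) (Set.Ioi (c₀ * t₀)) :=
    Jinfty_exp_integrableOn _
  have h2 : IntegrableOn (fun ξ : ℝ => Real.exp (-ξ) * ξ ^ 2) (Set.Ioi (c₀ * t₀)) :=
    Jinfty_exp_sq_integrableOn.mono_set (Set.Ioi_subset_Ioi hct.le)
  have hbi : IntegrableOn (fun ξ : ℝ => Real.exp (-ξ) * (M₁ + M₂ * ξ ^ 2))
      (Set.Ioi (c₀ * t₀)) := by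
    exact IntegrableOn.congr_fun ((h1.const_mul M₁).add (h2.const_mul M₂))
      (fun x _ => by simp only [Pi.add_apply]; ring) measurableSet_Ioi
  calc |∫ ξ in Set.Ioi (c₀ * t₀), Jinfty_Phi γ lam α t₀ ξ|
      = ‖∫ ξ in Set.Ioi (c₀ * t₀), Jinfty_Phi γ lam α t₀ ξ‖ := (Real.norm_eq_abs _).symm
    _ ≤ ∫ ξ in Set.Ioi (c₀ * t₀), ‖Jinfty_Phi γ lam α t₀ ξ‖ :=
        norm_integral_le_integral_norm _
    _ ≤ ∫ ξ in Set.Ioi (c₀ * t₀), Real.exp (-ξ) * (M₁ + M₂ * ξ ^ 2) := by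
        refine integral_mono_of_nonneg (ae_of_all _ fun ξ => norm_nonneg _) hbi ?_
        refine (ae_restrict_iff' measurableSet_Ioi).mpr (ae_of_all _ fun ξ hξ => ?_)
        simpa [Real.norm_eq_abs] using hKb t₀ ht₀ ξ hξ
    _ = M₁ * Real.exp (-(c₀ * t₀)) + M₂ * ∫ ξ in Set.Ioi (c₀ * t₀), Real.exp (-ξ) * ξ ^ 2 := by
        rw [show (fun ξ : ℝ => Real.exp (-ξ) * (M₁ + M₂ * ξ ^ 2))
            = fun ξ : ℝ => M₁ * Real.exp (-ξ) + M₂ * (Real.exp (-ξ) * ξ ^ 2) from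
          funext fun x => by ring]
        rw [integral_add (h1.const_mul M₁) (h2.const_mul M₂), integral_const_mul,
          integral_const_mul, integral_exp_neg_Ioi]
    _ ≤ M₁ * Real.exp (-(c₀ * t₀)) + M₂ * Real.Gamma 3 := by
        have := Jinfty_exp_sq_integral_le hct
        have h3 := mul_le_mul_of_nonneg_left this hM₂0.le
        linarith

/-- Estimate of the tail integral `J_∞`, and the consequence
`J_∞ = o((1/λ) t₀^{-α-1} ln t₀)` as `t₀ → ∞`. -/
theorem Jinfty_estimate (γ lam α c₀ : ℝ)
    (hγ : 0 < γ) (hlam : 0 < lam) (hα : α ∈ Ioo (0:ℝ) 1) (hc₀ : 0 < c₀) :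
    (∃ C : ℝ, 0 < C ∧ ∀ t₀ : ℝ, 1 ≤ t₀ →
      |t₀ ^ (α - 1) * Real.log t₀ *
          ∫ ξ in Ioi (c₀ * t₀), Real.exp (-ξ) *
            ((1 / π) * (lam * γ * ξ ^ α * Real.sin (α * π)) /
              ((-ξ * t₀ ^ (α - 1) + lam * γ * ξ ^ α * Real.cos (α * π) + lam * t₀ ^ α) ^ 2
                + (lam * γ * ξ ^ α * Real.sin (α * π)) ^ 2)) *
            (((-ξ * t₀ ^ (α - 1) + lam * γ * ξ ^ α * Real.cos (α * π) + lam * t₀ ^ α) ^ 2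
                + (lam * γ * ξ ^ α * Real.sin (α * π)) ^ 2
                - 2 * (-ξ * t₀ ^ (α - 1) + lam * γ * ξ ^ α * Real.cos (α * π) + lam * t₀ ^ α)
                    * (-ξ * t₀ ^ (α - 1) + lam * t₀ ^ α)) /
              ((-ξ * t₀ ^ (α - 1) + lam * γ * ξ ^ α * Real.cos (α * π) + lam * t₀ ^ α) ^ 2
                + (lam * γ * ξ ^ α * Real.sin (α * π)) ^ 2))|
        ≤ (C / lam) * t₀⁻¹ * Real.log t₀ * Real.exp (-(c₀ * t₀))
            + (C / lam ^ 3) * t₀ ^ (-2 * α - 1) * Real.log t₀ * Real.Gamma 3) ∧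
    Tendsto (fun t₀ : ℝ =>
      (t₀ ^ (α - 1) * Real.log t₀ *
          ∫ ξ in Ioi (c₀ * t₀), Real.exp (-ξ) *
            ((1 / π) * (lam * γ * ξ ^ α * Real.sin (α * π)) /
              ((-ξ * t₀ ^ (α - 1) + lam * γ * ξ ^ α * Real.cos (α * π) + lam * t₀ ^ α) ^ 2
                + (lam * γ * ξ ^ α * Real.sin (α * π)) ^ 2)) *
            (((-ξ * t₀ ^ (α - 1) + lam * γ * ξ ^ α * Real.cos (α * π) + lam * t₀ ^ α) ^ 2
                + (lam * γ * ξ ^ α * Real.sin (α * π)) ^ 2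
                - 2 * (-ξ * t₀ ^ (α - 1) + lam * γ * ξ ^ α * Real.cos (α * π) + lam * t₀ ^ α)
                    * (-ξ * t₀ ^ (α - 1) + lam * t₀ ^ α)) /
              ((-ξ * t₀ ^ (α - 1) + lam * γ * ξ ^ α * Real.cos (α * π) + lam * t₀ ^ α) ^ 2
                + (lam * γ * ξ ^ α * Real.sin (α * π)) ^ 2)))
        / ((1 / lam) * t₀ ^ (-α - 1) * Real.log t₀)) atTop (nhds 0) := by
  obtain ⟨hα0, hα1⟩ := hα
  obtain ⟨K, hK, hKb⟩ := Jinfty_integral_bound γ lam α c₀ hγ hlam ⟨hα0, hα1⟩ hc₀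
  have hca : 0 < c₀ ^ α := Real.rpow_pos_of_pos hc₀ α
  set C : ℝ := K / c₀ ^ α + K / (c₀ ^ α) ^ 3 + 1 with hC_def
  have hC : 0 < C := by positivity
  have hKC1 : K / c₀ ^ α ≤ C := by
    have h1 : 0 < K / (c₀ ^ α) ^ 3 := by positivity
    rw [hC_def]; linarith
  have hKC2 : K / (c₀ ^ α) ^ 3 ≤ C := by
    have h1 : 0 < K / c₀ ^ α := by positivity
    rw [hC_def]; linarith
  have hΓ : 0 ≤ Real.Gamma 3 := (Real.Gamma_pos_of_pos (by norm_num)).le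
  have hmain : ∀ t₀ : ℝ, 1 ≤ t₀ →
      |t₀ ^ (α - 1) * Real.log t₀ * ∫ ξ in Ioi (c₀ * t₀), Jinfty_Phi γ lam α t₀ ξ|
        ≤ (C / lam) * t₀⁻¹ * Real.log t₀ * Real.exp (-(c₀ * t₀))
            + (C / lam ^ 3) * t₀ ^ (-2 * α - 1) * Real.log t₀ * Real.Gamma 3 := by
    intro t₀ ht₀
    have ht₀0 : (0:ℝ) < t₀ := lt_of_lt_of_le one_pos ht₀
    have hct : 0 < c₀ * t₀ := by positivity
    have hta : 0 < t₀ ^ α := Real.rpow_pos_of_pos ht₀0 α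
    have hta3 : 0 < t₀ ^ (α * 3) := Real.rpow_pos_of_pos ht₀0 _
    have htb : 0 < t₀ ^ (α - 1) := Real.rpow_pos_of_pos ht₀0 _
    have hL : 0 ≤ Real.log t₀ := Real.log_nonneg ht₀
    have hmr : (c₀ * t₀) ^ α = c₀ ^ α * t₀ ^ α := Real.mul_rpow hc₀.le ht₀0.le
    have hsplit1 : t₀ ^ (α - 1) = t₀ ^ α * t₀⁻¹ := by
      rw [show α - 1 = α + (-1) by ring, Real.rpow_add ht₀0, Real.rpow_neg_one]
    have hpow3 : (t₀ ^ α) ^ (3:ℕ) = t₀ ^ (α * 3) := by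
      rw [← Real.rpow_natCast (t₀ ^ α) 3, ← Real.rpow_mul ht₀0.le]
      norm_num
    have hsplit2 : t₀ ^ (α - 1) = t₀ ^ (α * 3) * t₀ ^ (-2 * α - 1) := by
      rw [← Real.rpow_add ht₀0]
      congr 1
      ring
    have hA : t₀ ^ (α - 1) * (K / (lam * (c₀ * t₀) ^ α)) ≤ (C / lam) * t₀⁻¹ := by
      have e1 : t₀ ^ (α - 1) * (K / (lam * (c₀ * t₀) ^ α))
          = (K / c₀ ^ α / lam) * t₀⁻¹ := by
        rw [hmr, hsplit1]
        field_simp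
      rw [e1]
      have h2 : K / c₀ ^ α / lam ≤ C / lam := by gcongr
      exact mul_le_mul_of_nonneg_right h2 (inv_nonneg.mpr ht₀0.le)
    have hB : t₀ ^ (α - 1) * (K / (lam ^ 3 * ((c₀ * t₀) ^ α) ^ 3))
        ≤ (C / lam ^ 3) * t₀ ^ (-2 * α - 1) := by
      have e2 : t₀ ^ (α - 1) * (K / (lam ^ 3 * ((c₀ * t₀) ^ α) ^ 3))
          = (K / (c₀ ^ α) ^ 3 / lam ^ 3) * t₀ ^ (-2 * α - 1) := by
        rw [hmr, mul_pow, hpow3, hsplit2]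
        field_simp
      rw [e2]
      have h2 : K / (c₀ ^ α) ^ 3 / lam ^ 3 ≤ C / lam ^ 3 := by gcongr
      exact mul_le_mul_of_nonneg_right h2 (Real.rpow_pos_of_pos ht₀0 _).le
    rw [abs_mul, abs_mul, abs_of_nonneg htb.le, abs_of_nonneg hL]
    calc t₀ ^ (α - 1) * Real.log t₀ * |∫ ξ in Ioi (c₀ * t₀), Jinfty_Phi γ lam α t₀ ξ|
        ≤ t₀ ^ (α - 1) * Real.log t₀ *
            (K / (lam * (c₀ * t₀) ^ α) * Real.exp (-(c₀ * t₀))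
              + K / (lam ^ 3 * ((c₀ * t₀) ^ α) ^ 3) * Real.Gamma 3) :=
          mul_le_mul_of_nonneg_left (hKb t₀ ht₀) (by positivity)
      _ = (t₀ ^ (α - 1) * (K / (lam * (c₀ * t₀) ^ α))) * Real.log t₀ * Real.exp (-(c₀ * t₀))
          + (t₀ ^ (α - 1) * (K / (lam ^ 3 * ((c₀ * t₀) ^ α) ^ 3))) * Real.log t₀
              * Real.Gamma 3 := by ring
      _ ≤ ((C / lam) * t₀⁻¹) * Real.log t₀ * Real.exp (-(c₀ * t₀))
          + ((C / lam ^ 3) * t₀ ^ (-2 * α - 1)) * Real.log t₀ * Real.Gamma 3 := by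
          gcongr
      _ = (C / lam) * t₀⁻¹ * Real.log t₀ * Real.exp (-(c₀ * t₀))
          + (C / lam ^ 3) * t₀ ^ (-2 * α - 1) * Real.log t₀ * Real.Gamma 3 := by ring
  constructor
  · exact ⟨C, hC, fun t₀ ht₀ => hmain t₀ ht₀⟩
  · have hG : Tendsto (fun t₀ : ℝ => C * (t₀ ^ α * Real.exp (-(c₀ * t₀)))
        + (C * Real.Gamma 3 / lam ^ 2) * t₀ ^ (-α)) atTop (nhds 0) := by
      have h1 : Tendsto (fun x : ℝ => x ^ α * Real.exp (-c₀ * x)) atTop (nhds 0) :=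
        tendsto_rpow_mul_exp_neg_mul_atTop_nhds_zero α c₀ hc₀
      have h2 : Tendsto (fun x : ℝ => x ^ (-α)) atTop (nhds 0) := tendsto_rpow_neg_atTop hα0
      have h3 := (h1.const_mul C).add (h2.const_mul (C * Real.Gamma 3 / lam ^ 2))
      simpa [neg_mul] using h3
    apply squeeze_zero_norm' ?_ hG
    filter_upwards [eventually_gt_atTop (1:ℝ)] with t₀ ht₀1
    have ht₀ : 1 ≤ t₀ := ht₀1.le
    have ht₀0 : (0:ℝ) < t₀ := lt_trans one_pos ht₀1
    have hL : 0 < Real.log t₀ := Real.log_pos ht₀1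
    have hd : 0 < (1 / lam) * t₀ ^ (-α - 1) * Real.log t₀ :=
      mul_pos (mul_pos (by positivity) (Real.rpow_pos_of_pos ht₀0 _)) hL
    have h4 : t₀ ^ α * t₀ ^ (-α - 1) = t₀⁻¹ := by
      rw [← Real.rpow_add ht₀0, show α + (-α - 1) = -1 by ring, Real.rpow_neg_one]
    have h5 : t₀ ^ (-α) * t₀ ^ (-α - 1) = t₀ ^ (-2 * α - 1) := by
      rw [← Real.rpow_add ht₀0]
      congr 1
      ring
    have hBd : (C / lam) * t₀⁻¹ * Real.log t₀ * Real.exp (-(c₀ * t₀))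
          + (C / lam ^ 3) * t₀ ^ (-2 * α - 1) * Real.log t₀ * Real.Gamma 3
        = (C * (t₀ ^ α * Real.exp (-(c₀ * t₀))) + (C * Real.Gamma 3 / lam ^ 2) * t₀ ^ (-α))
            * ((1 / lam) * t₀ ^ (-α - 1) * Real.log t₀) := by
      rw [← h4, ← h5]
      field_simp
    rw [Real.norm_eq_abs, abs_div, abs_of_pos hd]
    calc |t₀ ^ (α - 1) * Real.log t₀ * ∫ ξ in Ioi (c₀ * t₀), Jinfty_Phi γ lam α t₀ ξ|
            / ((1 / lam) * t₀ ^ (-α - 1) * Real.log t₀)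
        ≤ ((C / lam) * t₀⁻¹ * Real.log t₀ * Real.exp (-(c₀ * t₀))
            + (C / lam ^ 3) * t₀ ^ (-2 * α - 1) * Real.log t₀ * Real.Gamma 3)
            / ((1 / lam) * t₀ ^ (-α - 1) * Real.log t₀) := by
          gcongr
          exact hmain t₀ ht₀
      _ = C * (t₀ ^ α * Real.exp (-(c₀ * t₀))) + (C * Real.Gamma 3 / lam ^ 2) * t₀ ^ (-α) := by
          rw [hBd, mul_div_cancel_right₀ _ hd.ne']
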